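/- Let p₁, p₂ ∈ (0,1) with p₁ + p₂ = 1, let H be a nonempty graph, and let F₁,…,F_s be nonempty graphs all with exactly k edges. If (Fᵢ, H) is (p₁,p₂)-common for each 1 ≤ i ≤ s, then (F, H) is (p₁,p₂)-common, where F is the disjoint union of F₁,…,F_s. -/

import Mathlib

open MeasureTheory Finset

/-- The uniform measure on the unit interval `[0,1]`, as a measure on `ℝ`. -/
noncomputable def unitM : Measure ℝ := volume.restrict (Set.Icc 0 1)

instance : SigmaFinite unitM := by unfold unitM; infer_instance

/-- Value of a symmetric two-variable function on an unordered pair of vertices. -/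
noncomputable def symEdge {α : Type*} (W : ℝ → ℝ → ℝ) (x : α → ℝ) : Sym2 α → ℝ :=
  Sym2.lift ⟨fun u v => (W (x u) (x v) + W (x v) (x u)) / 2, fun u v => by ring⟩

open Classical in
/-- Homomorphism density of a finite simple graph in a kernel. -/
noncomputable def homDensity {V : Type*} [Fintype V] (G : SimpleGraph V)
    (W : ℝ → ℝ → ℝ) : ℝ :=
  ∫ x : V → ℝ, ∏ e ∈ G.edgeFinset, symEdge W x e ∂(Measure.pi fun _ => unitM)

/-- Number of edges of a graph. -/
noncomputable def eCount {V : Type*} (G : SimpleGraph V) : ℕ := G.edgeSet.ncard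

def IsSymm2 (W : ℝ → ℝ → ℝ) : Prop := ∀ x y, W x y = W y x

/-- A kernel: bounded, symmetric, measurable. -/
def IsKernel (W : ℝ → ℝ → ℝ) : Prop :=
  Measurable (Function.uncurry W) ∧ IsSymm2 W ∧ ∃ C, ∀ x y, |W x y| ≤ C

/-- A graphon: symmetric measurable with values in `[0,1]`. -/
def IsGraphon (W : ℝ → ℝ → ℝ) : Prop :=
  Measurable (Function.uncurry W) ∧ IsSymm2 W ∧ ∀ x y, W x y ∈ Set.Icc (0:ℝ) 1

/-- The pair `(G₁, G₂)` is `(p₁,p₂)`-common. -/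
def IsCommonPair {V₁ V₂ : Type*} [Fintype V₁] [Fintype V₂]
    (G₁ : SimpleGraph V₁) (G₂ : SimpleGraph V₂) (p₁ p₂ : ℝ) : Prop :=
  ∀ W₁ W₂ : ℝ → ℝ → ℝ, IsGraphon W₁ → IsGraphon W₂ → (∀ x y, W₁ x y + W₂ x y = 1) →
    homDensity G₁ W₁ / (eCount G₁ * p₁ ^ (eCount G₁ - 1))
      + homDensity G₂ W₂ / (eCount G₂ * p₂ ^ (eCount G₂ - 1))
      ≥ p₁ / eCount G₁ + p₂ / eCount G₂

/-- The disjoint union of the graphs `F 0, …, F (s-1)` (all on vertex type `V`),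
realized on the vertex type `V × Fin s`. -/
def unionGraph {V : Type*} {s : ℕ} (F : Fin s → SimpleGraph V) :
    SimpleGraph (V × Fin s) where
  Adj a b := a.2 = b.2 ∧ (F a.2).Adj a.1 b.1
  symm := by
    constructor
    rintro ⟨u, i⟩ ⟨v, j⟩ ⟨h, hadj⟩
    cases h
    exact ⟨rfl, hadj.symm⟩
  loopless := by
    constructor
    rintro ⟨u, i⟩ ⟨-, h⟩
    exact (F i).irrefl h

lemma symEdge_map {α β : Type*} (W : ℝ → ℝ → ℝ) (g : α → β) (x : β → ℝ) (e : Sym2 α) :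
    symEdge W x (Sym2.map g e) = symEdge W (x ∘ g) e := by
  induction e using Sym2.ind with
  | _ u v => simp [symEdge, Sym2.map_pair_eq]

lemma symEdge_mem_Icc {α : Type*} {W : ℝ → ℝ → ℝ} (hW : ∀ x y, W x y ∈ Set.Icc (0:ℝ) 1)
    (x : α → ℝ) (e : Sym2 α) : symEdge W x e ∈ Set.Icc (0:ℝ) 1 := by
  induction e using Sym2.ind with
  | _ u v =>
    have h1 := hW (x u) (x v)
    have h2 := hW (x v) (x u)
    simp only [Set.mem_Icc] at *
    constructor
    · simp only [symEdge, Sym2.lift_mk]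
      linarith [h1.1, h2.1]
    · simp only [symEdge, Sym2.lift_mk]
      linarith [h1.2, h2.2]

open Classical in
lemma eCount_eq_card {V : Type*} [Fintype V] (G : SimpleGraph V) :
    eCount G = G.edgeFinset.card := by
  classical
  rw [eCount, Set.ncard_eq_toFinset_card']
  congr 1

open Classical in
lemma unionGraph_edgeFinset {V : Type*} [Fintype V] {s : ℕ} (F : Fin s → SimpleGraph V) :
    (unionGraph F).edgeFinset
      = Finset.univ.biUnion
          (fun i => ((F i).edgeFinset).image (Sym2.map (fun v => (v, i)))) := by
  classical
  ext e
  simp only [Finset.mem_biUnion, Finset.mem_univ, true_and, Finset.mem_image,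
    SimpleGraph.mem_edgeFinset]
  constructor
  · induction e using Sym2.ind with
    | _ a b =>
      rintro h
      rw [SimpleGraph.mem_edgeSet] at h
      obtain ⟨u, i⟩ := a
      obtain ⟨v, j⟩ := b
      obtain ⟨hij, hadj⟩ := h
      cases hij
      exact ⟨i, s(u, v), (SimpleGraph.mem_edgeSet _).2 hadj, by simp [Sym2.map_pair_eq]⟩
  · rintro ⟨i, e', he', rfl⟩
    induction e' using Sym2.ind with
    | _ u v =>
      rw [Sym2.map_pair_eq, SimpleGraph.mem_edgeSet]
      exact ⟨rfl, he'⟩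

open Classical in
lemma prod_unionGraph {V : Type*} [Fintype V] {s : ℕ} (F : Fin s → SimpleGraph V)
    (f : Sym2 (V × Fin s) → ℝ) :
    ∏ e ∈ (unionGraph F).edgeFinset, f e
      = ∏ i, ∏ e ∈ (F i).edgeFinset, f (Sym2.map (fun v => (v, i)) e) := by
  classical
  rw [unionGraph_edgeFinset, Finset.prod_biUnion]
  · refine Finset.prod_congr rfl fun i _ => ?_
    rw [Finset.prod_image]
    intro a _ b _ hab
    exact Sym2.map.injective (fun x y hxy => (Prod.mk.injEq _ _ _ _ ▸ hxy).1) hab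
  · intro i _ j _ hij
    simp only [Finset.disjoint_left, Finset.mem_image]
    rintro e ⟨e₁, -, rfl⟩ ⟨e₂, -, he⟩
    induction e₂ using Sym2.ind with
    | _ u v =>
      induction e₁ using Sym2.ind with
      | _ a b =>
        rw [Sym2.map_pair_eq, Sym2.map_pair_eq, Sym2.eq_iff] at he
        rcases he with ⟨h, -⟩ | ⟨h, -⟩ <;>
          exact hij (congrArg Prod.snd h).symm

open Classical in
lemma eCount_unionGraph {V : Type*} [Fintype V] {s : ℕ} (F : Fin s → SimpleGraph V) :
    eCount (unionGraph F) = ∑ i, eCount (F i) := by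
  classical
  simp only [eCount_eq_card]
  rw [unionGraph_edgeFinset, Finset.card_biUnion]
  · refine Finset.sum_congr rfl fun i _ => ?_
    rw [Finset.card_image_of_injective]
    exact Sym2.map.injective (fun x y hxy => (Prod.mk.injEq _ _ _ _ ▸ hxy).1)
  · intro i _ j hj hij
    simp only [Finset.disjoint_left, Finset.mem_image]
    rintro e ⟨e₁, -, rfl⟩ ⟨e₂, -, he⟩
    induction e₂ using Sym2.ind with
    | _ u v =>
      induction e₁ using Sym2.ind with
      | _ a b =>
        rw [Sym2.map_pair_eq, Sym2.map_pair_eq, Sym2.eq_iff] at he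
        rcases he with ⟨h, -⟩ | ⟨h, -⟩ <;>
          exact hij (congrArg Prod.snd h).symm

noncomputable def packEquiv (V : Type*) (s : ℕ) :
    ((Fin s) → (V → ℝ)) ≃ᵐ ((V × Fin s) → ℝ) where
  toFun y := fun p => y p.2 p.1
  invFun x := fun i v => x (v, i)
  left_inv y := rfl
  right_inv x := rfl
  measurable_toFun := by
    apply measurable_pi_lambda
    intro p
    exact (measurable_pi_apply p.1).comp (measurable_pi_apply p.2)
  measurable_invFun := by
    apply measurable_pi_lambda
    intro i
    apply measurable_pi_lambda
    intro v
    exact measurable_pi_apply (v, i)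

lemma packEquiv_measurePreserving (V : Type*) (s : ℕ) [Fintype V] :
    MeasurePreserving (packEquiv V s)
      (Measure.pi fun _ : Fin s => Measure.pi fun _ : V => unitM)
      (Measure.pi fun _ : V × Fin s => unitM) := by
  constructor
  · exact (packEquiv V s).measurable
  · refine (Measure.pi_eq fun A hA => ?_).symm
    rw [MeasurableEquiv.map_apply]
    have hpre : (packEquiv V s) ⁻¹' (Set.pi Set.univ A)
        = Set.pi Set.univ (fun i : Fin s => Set.pi Set.univ (fun v : V => A (v, i))) := by
      ext y
      simp only [Set.mem_preimage, Set.mem_pi, Set.mem_univ, true_implies, Prod.forall]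
      constructor
      · intro h i v; exact h v i
      · intro h v i; exact h i v
    rw [hpre, Measure.pi_pi]
    simp_rw [Measure.pi_pi]
    rw [Fintype.prod_prod_type]
    exact Finset.prod_comm

open Classical in
lemma homDensity_unionGraph {V : Type*} [Fintype V] {s : ℕ}
    (F : Fin s → SimpleGraph V) (W : ℝ → ℝ → ℝ) :
    homDensity (unionGraph F) W = ∏ i, homDensity (F i) W := by
  classical
  unfold homDensity
  have hre : ∀ x : (V × Fin s) → ℝ, ∏ e ∈ (unionGraph F).edgeFinset, symEdge W x e
      = ∏ i, ∏ e ∈ (F i).edgeFinset, symEdge W (fun v => x (v, i)) e := by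
    intro x
    rw [prod_unionGraph]
    exact Finset.prod_congr rfl fun i _ => Finset.prod_congr rfl fun e _ => symEdge_map W _ x e
  simp_rw [hre]
  rw [← (packEquiv_measurePreserving V s).integral_comp']
  letI : MeasureSpace (V → ℝ) := ⟨Measure.pi fun _ => unitM⟩
  haveI : SigmaFinite (volume : Measure (V → ℝ)) :=
    inferInstanceAs (SigmaFinite (Measure.pi fun _ : V => unitM))
  exact MeasureTheory.integral_fintype_prod_eq_prod (ι := Fin s)
    (f := fun i z => ∏ e ∈ (F i).edgeFinset, symEdge W z e)

open Classical in
lemma homDensity_nonneg {V : Type*} [Fintype V] (G : SimpleGraph V) {W : ℝ → ℝ → ℝ}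
    (hW : ∀ x y, W x y ∈ Set.Icc (0:ℝ) 1) : 0 ≤ homDensity G W := by
  refine integral_nonneg fun x => Finset.prod_nonneg fun e _ => (symEdge_mem_Icc hW x e).1

/-- If `F₁, …, F_s` are nonempty graphs, all with exactly `k` edges, `H` is a nonempty
graph and `(Fᵢ, H)` is `(p₁,p₂)`-common for each `i`, then the disjoint union
`(F₁ ⊔ ⋯ ⊔ F_s, H)` is `(p₁,p₂)`-common. -/
theorem common_disjoint_union {V₁ V₂ : Type*} [Fintype V₁] [Fintype V₂]
    (s k : ℕ) (hs : 1 ≤ s) (hk : 1 ≤ k)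
    (F : Fin s → SimpleGraph V₁) (H : SimpleGraph V₂)
    (hH : 1 ≤ eCount H) (hF : ∀ i, eCount (F i) = k)
    (p₁ p₂ : ℝ) (hp₁ : p₁ ∈ Set.Ioo (0:ℝ) 1) (hp₂ : p₂ ∈ Set.Ioo (0:ℝ) 1)
    (hsum : p₁ + p₂ = 1)
    (hcommon : ∀ i, IsCommonPair (F i) H p₁ p₂) :
    IsCommonPair (unionGraph F) H p₁ p₂ := by
  intro W₁ W₂ hW₁ hW₂ h12
  set m := eCount H with hm
  set A : Fin s → ℝ := fun i => homDensity (F i) W₁ with hA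
  set B : ℝ := homDensity H W₂ with hB
  have hp1 : 0 < p₁ := hp₁.1
  have hp2 : 0 < p₂ := hp₂.1
  have hmpos : (0:ℝ) < m := by exact_mod_cast hH
  set M : ℝ := (m:ℝ) * p₂ ^ (m - 1) with hMdef
  have hM : 0 < M := mul_pos hmpos (pow_pos hp2 _)
  have hkpos : (0:ℝ) < (k:ℝ) := by exact_mod_cast hk
  set K : ℝ := (k:ℝ) * p₁ ^ (k - 1) with hKdef
  have hK : 0 < K := mul_pos hkpos (pow_pos hp1 _)
  set D : ℝ := p₂ / m - B / M with hD
  have hAnn : ∀ i, 0 ≤ A i := fun i => homDensity_nonneg _ hW₁.2.2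
  -- nat exponent identities
  have hks1 : s * k - 1 = (k - 1) + k * (s - 1) := by
    obtain ⟨t, rfl⟩ : ∃ t, s = t + 1 := ⟨s - 1, by omega⟩
    obtain ⟨u, rfl⟩ : ∃ u, k = u + 1 := ⟨k - 1, by omega⟩
    simp only [Nat.add_sub_cancel]
    have h : (t+1)*(u+1) = (u + (u+1)*t) + 1 := by ring
    rw [h, Nat.succ_sub_one]
  have hks2 : s * k = k * (s - 1) + k := by
    obtain ⟨t, rfl⟩ : ∃ t, s = t + 1 := ⟨s - 1, by omega⟩
    simp only [Nat.add_sub_cancel]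
    ring
  have hpk : p₁ ^ (k - 1) * p₁ = p₁ ^ k := by
    rw [← pow_succ]
    congr 1
    omega
  have hpkpos : (0:ℝ) < p₁ ^ k := pow_pos hp1 _
  have hpkne : (p₁:ℝ) ^ k ≠ 0 := hpkpos.ne'
  have key : ∀ i, p₁ ^ k + K * D ≤ A i := by
    intro i
    have hci := hcommon i W₁ W₂ hW₁ hW₂ h12
    rw [hF i] at hci
    have h1 : p₁ / k + D ≤ A i / K := by
      have h0 : p₁ / ↑k + p₂ / ↑m ≤ A i / K + B / M := hci
      rw [hD]
      linarith
    have h2 : (p₁ / k + D) * K ≤ A i := by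
      rw [← le_div_iff₀ hK]
      exact h1
    have h3 : p₁ / ↑k * K = p₁ ^ k := by
      rw [hKdef, div_mul_eq_mul_div, mul_comm ((k:ℝ)) (p₁ ^ (k-1)), ← mul_assoc,
        mul_div_assoc, div_self hkpos.ne', mul_one, mul_comm, hpk]
    calc p₁ ^ k + K * D = (p₁ / k + D) * K := by rw [add_mul, h3, mul_comm K D]
      _ ≤ A i := h2
  have hEF : eCount (unionGraph F) = s * k := by
    rw [eCount_unionGraph]
    simp [hF, Finset.sum_const, mul_comm]
  have hhd : homDensity (unionGraph F) W₁ = ∏ i, A i := homDensity_unionGraph F W₁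
  set P : ℝ := ∏ i, A i with hP
  set Q : ℝ := ((s*k : ℕ):ℝ) * p₁ ^ (s*k - 1) with hQdef
  have hskpos : (0:ℝ) < ((s*k : ℕ):ℝ) := by
    have : 1 ≤ s * k := Nat.one_le_iff_ne_zero.2 (by positivity)
    exact_mod_cast this
  have hQ : 0 < Q := mul_pos hskpos (pow_pos hp1 _)
  have hQK : Q = (s:ℝ) * K * (p₁ ^ k) ^ (s - 1) := by
    rw [hQdef, hKdef, ← pow_mul, hks1, pow_add]
    push_cast
    ring
  have hsplitX : p₁ ^ (s*k) = (p₁ ^ k) ^ (s - 1) * p₁ ^ k := by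
    rw [hks2, pow_add, pow_mul]
  have hXpos : (0:ℝ) < (p₁ ^ k) ^ (s - 1) := pow_pos hpkpos _
  have hs1 : (1:ℝ) ≤ (s:ℝ) := by exact_mod_cast hs
  have hT : p₁ ^ (s*k) + Q * D ≤ P := by
    rcases le_or_gt 0 (p₁ ^ k + K * D) with hc | hc
    · -- Bernoulli case
      have hprod : (p₁ ^ k + K * D) ^ s ≤ P := by
        calc (p₁ ^ k + K * D) ^ s = ∏ _i : Fin s, (p₁ ^ k + K * D) := by
              rw [Finset.prod_const, Finset.card_univ, Fintype.card_fin]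
          _ ≤ ∏ i, A i := Finset.prod_le_prod (fun i _ => hc) (fun i _ => key i)
      set a : ℝ := K * D / p₁ ^ k with ha
      have h1a : 0 ≤ 1 + a := by
        have h0 : 0 ≤ (p₁ ^ k + K * D) / p₁ ^ k := div_nonneg hc hpkpos.le
        rw [add_div, div_self hpkne] at h0
        linarith
      have hbern : 1 + (s:ℝ) * a ≤ (1 + a) ^ s := one_add_mul_le_pow (by linarith) s
      have hmul := mul_le_mul_of_nonneg_left hbern (pow_pos hpkpos s).le
      have hc_eq : p₁ ^ k * (1 + a) = p₁ ^ k + K * D := by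
        rw [ha]; field_simp
      have hrhs : (p₁ ^ k) ^ s * (1 + a) ^ s = (p₁ ^ k + K * D) ^ s := by
        rw [← mul_pow, hc_eq]
      have hsplitS : (p₁ ^ k) ^ s = (p₁ ^ k) ^ (s - 1) * p₁ ^ k := by
        rw [← pow_succ]
        congr 1
        omega
      have hlhs : (p₁ ^ k) ^ s * (1 + (s:ℝ) * a) = p₁ ^ (s*k) + Q * D := by
        rw [ha, hQK, hsplitX, hsplitS]
        field_simp
      calc p₁ ^ (s*k) + Q * D = (p₁ ^ k) ^ s * (1 + (s:ℝ) * a) := hlhs.symm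
        _ ≤ (p₁ ^ k) ^ s * (1 + a) ^ s := hmul
        _ = (p₁ ^ k + K * D) ^ s := hrhs
        _ ≤ P := hprod
    · -- negative case: RHS ≤ 0 ≤ P
      have hPnn : 0 ≤ P := Finset.prod_nonneg fun i _ => hAnn i
      have hDneg : K * D < -p₁ ^ k := by linarith
      have hQD : Q * D = (s:ℝ) * (p₁ ^ k) ^ (s-1) * (K * D) := by
        rw [hQK]; ring
      have hle : (s:ℝ) * (p₁ ^ k) ^ (s-1) * (K * D)
          ≤ (s:ℝ) * (p₁ ^ k) ^ (s-1) * (-(p₁ ^ k)) := by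
        apply mul_le_mul_of_nonneg_left hDneg.le
        positivity
      have hone : (p₁ ^ k) ^ (s-1) * p₁ ^ k ≤ (s:ℝ) * ((p₁ ^ k) ^ (s-1) * p₁ ^ k) :=
        le_mul_of_one_le_left (by positivity) hs1
      rw [hsplitX, hQD]
      nlinarith [hle, hone]
  -- conclude
  rw [ge_iff_le, hEF, hhd, ← hQdef]
  have hdiv : (p₁ ^ (s*k) + Q * D) / Q ≤ P / Q := by gcongr
  have heq : (p₁ ^ (s*k) + Q * D) / Q = p₁ / ((s*k:ℕ):ℝ) + D := by
    rw [add_div, mul_comm Q D, mul_div_assoc, div_self hQ.ne', mul_one]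
    congr 1
    have hsk1 : p₁ ^ (s*k) = p₁ ^ (s*k - 1) * p₁ := by
      rw [← pow_succ]
      congr 1
      have : 1 ≤ s * k := Nat.one_le_iff_ne_zero.2 (by positivity)
      omega
    rw [hsk1, hQdef]
    rw [div_eq_div_iff hQ.ne' (by exact_mod_cast hskpos.ne' : ((s*k:ℕ):ℝ) ≠ 0)]
    ring
  have hfin : p₁ / ((s*k:ℕ):ℝ) + D ≤ P / Q := heq ▸ hdiv
  have hDM : D + B / M = p₂ / m := by rw [hD]; ring
  linarith
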